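/- Let M, N be sequences of positive reals with N satisfying M_0-normalization, log-convexity and moderate growth, and let d ≥ 2. Suppose there exist constants C, C' > 0 such that M_{dk} ≤ C^{k+1} N_{2k} for all k ∈ ℕ, and that M satisfies moderate growth and the two-sided estimate A_1^{j+1}(M_j)^s ≤ M_{⌊sj⌋} ≤ A_2^{j+1}(M_j)^s for all s ≥ 1. Then there exists C_1 > 0 with N_k ≥ C_1^{k+1} (M_k)^{d/2} for all k ∈ ℕ. -/

import Mathlib

theorem stmt15 (M N : ℕ → ℝ) (hMpos : ∀ j, 0 < M j) (hNpos : ∀ j, 0 < N j)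
    (hN0 : N 0 = 1) (hNmono : Monotone N)
    (hNlc : Monotone (fun j => N (j + 1) / N j))
    (hNmg : ∃ A : ℝ, 0 < A ∧ ∀ j k : ℕ, N (j + k) ≤ A ^ (j + k) * (N j * N k))
    (hMmg : ∃ A : ℝ, 0 < A ∧ ∀ j k : ℕ, M (j + k) ≤ A ^ (j + k) * (M j * M k))
    (hMequiv : ∀ s : ℝ, 1 ≤ s → ∃ A₁ A₂ : ℝ, 0 < A₁ ∧ 0 < A₂ ∧
      ∀ j : ℕ, A₁ ^ (j + 1) * (M j) ^ s ≤ M ⌊s * j⌋₊ ∧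
        M ⌊s * j⌋₊ ≤ A₂ ^ (j + 1) * (M j) ^ s)
    (d : ℕ) (hd : 2 ≤ d) (C : ℝ) (hC : 0 < C)
    (hMN : ∀ k : ℕ, M (d * k) ≤ C ^ (k + 1) * N (2 * k)) :
    ∃ C₁ : ℝ, 0 < C₁ ∧ ∀ k : ℕ, C₁ ^ (k + 1) * (M k) ^ ((d : ℝ) / 2) ≤ N k := by
  obtain ⟨A, hA, hAmg⟩ := hMmg
  obtain ⟨A₁, A₂, hA₁, hA₂, hMe2⟩ := hMequiv 2 one_le_two
  have hd1 : (1:ℝ) ≤ (d:ℝ) := by exact_mod_cast Nat.one_le_of_lt hd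
  obtain ⟨B₁, B₂, hB₁, hB₂, hMed⟩ := hMequiv d hd1
  have hdhalf : (0:ℝ) ≤ (d:ℝ)/2 := by positivity
  set D : ℝ := max A 1 * max (M 1) 1 with hDdef
  have hD1 : (1:ℝ) ≤ D := by
    have h1 : (1:ℝ) ≤ max A 1 := le_max_right _ _
    have h2 : (1:ℝ) ≤ max (M 1) 1 := le_max_right _ _
    nlinarith
  have hD0 : (0:ℝ) < D := lt_of_lt_of_le one_pos hD1
  set P : ℝ := A₂ ^ ((d:ℝ)/2) with hPdef
  have hP0 : 0 < P := Real.rpow_pos_of_pos hA₂ _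
  set E : ℝ := max (C * P / B₁) 1 with hEdef
  have hE1 : (1:ℝ) ≤ E := le_max_right _ _
  have hE0 : 0 < E := lt_of_lt_of_le one_pos hE1
  set Q : ℝ := D ^ ((d:ℝ)/2) with hQdef
  have hQ0 : 0 < Q := Real.rpow_pos_of_pos hD0 _
  have hQ1 : (1:ℝ) ≤ Q := Real.one_le_rpow hD1 hdhalf
  -- key lemma on even indices
  have key : ∀ m : ℕ, M (2*m) ^ ((d:ℝ)/2) ≤ E ^ (m+1) * N (2*m) := by
    intro m
    have hf2 : ⌊(2:ℝ) * m⌋₊ = 2*m := by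
      have : (2:ℝ) * m = ((2*m : ℕ) : ℝ) := by push_cast; ring
      rw [this, Nat.floor_natCast]
    have hfd : ⌊(d:ℝ) * m⌋₊ = d*m := by
      have : (d:ℝ) * m = ((d*m : ℕ) : ℝ) := by push_cast; ring
      rw [this, Nat.floor_natCast]
    have h1 : B₁ ^ (m+1) * M m ^ (d:ℝ) ≤ M (d*m) := by
      have := (hMed m).1; rwa [hfd] at this
    have h3 : M (2*m) ≤ A₂ ^ (m+1) * M m ^ (2:ℝ) := by
      have := (hMe2 m).2; rwa [hf2] at this
    have e1 : M (2*m) ^ ((d:ℝ)/2) ≤ (A₂ ^ (m+1) * M m ^ (2:ℝ)) ^ ((d:ℝ)/2) :=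
      Real.rpow_le_rpow (hMpos _).le h3 hdhalf
    have e2 : (A₂ ^ (m+1) * M m ^ (2:ℝ)) ^ ((d:ℝ)/2) = P ^ (m+1) * M m ^ (d:ℝ) := by
      rw [Real.mul_rpow (pow_nonneg hA₂.le _) (Real.rpow_nonneg (hMpos m).le _)]
      congr 1
      · rw [← Real.rpow_natCast A₂ (m+1), ← Real.rpow_mul hA₂.le,
          mul_comm ((m+1 : ℕ) : ℝ), Real.rpow_mul hA₂.le, Real.rpow_natCast]
      · rw [← Real.rpow_mul (hMpos m).le, show (2:ℝ) * ((d:ℝ)/2) = (d:ℝ) by ring]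
    have h1' : M m ^ (d:ℝ) ≤ M (d*m) / B₁ ^ (m+1) := by
      rw [le_div_iff₀ (pow_pos hB₁ _)]
      calc M m ^ (d:ℝ) * B₁ ^ (m+1) = B₁ ^ (m+1) * M m ^ (d:ℝ) := by ring
        _ ≤ M (d*m) := h1
    calc M (2*m) ^ ((d:ℝ)/2) ≤ P ^ (m+1) * M m ^ (d:ℝ) := e2 ▸ e1
      _ ≤ P ^ (m+1) * (M (d*m) / B₁ ^ (m+1)) := by
          exact mul_le_mul_of_nonneg_left h1' (pow_nonneg hP0.le _)
      _ ≤ P ^ (m+1) * ((C ^ (m+1) * N (2*m)) / B₁ ^ (m+1)) := by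
          gcongr
          exact hMN m
      _ = (C * P / B₁) ^ (m+1) * N (2*m) := by
          rw [div_pow, mul_pow]
          ring
      _ ≤ E ^ (m+1) * N (2*m) :=
          mul_le_mul_of_nonneg_right
            (pow_le_pow_left₀ (div_nonneg (mul_nonneg hC.le hP0.le) hB₁.le)
              (le_max_left _ _) _) (hNpos _).le
  -- M k controlled by M (2*(k/2))
  have step : ∀ k : ℕ, M k ≤ D ^ (k+1) * M (2*(k/2)) := by
    intro k
    rcases Nat.even_or_odd k with ⟨m, hm⟩ | ⟨m, hm⟩
    · have hk : 2*(k/2) = k := by omega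
      rw [hk]
      exact le_mul_of_one_le_left (hMpos k).le (one_le_pow₀ hD1)
    · have hk : 2*(k/2) = 2*m := by omega
      have hkm : k = 2*m + 1 := hm
      rw [hk, hkm]
      have h := hAmg (2*m) 1
      have hb : A ^ (2*m+1) * M 1 ≤ D ^ (2*m+2) := by
        have hA' : A ^ (2*m+1) ≤ (max A 1) ^ (2*m+2) :=
          le_trans (pow_le_pow_left₀ hA.le (le_max_left A 1) _)
            (pow_le_pow_right₀ (le_max_right A 1) (by omega))
        have hM1 : M 1 ≤ (max (M 1) 1) ^ (2*m+2) :=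
          le_trans (le_max_left _ _) (le_self_pow₀ (le_max_right _ _) (by omega))
        calc A ^ (2*m+1) * M 1 ≤ (max A 1) ^ (2*m+2) * (max (M 1) 1) ^ (2*m+2) := by
              apply mul_le_mul hA' hM1 (hMpos 1).le (by positivity)
          _ = D ^ (2*m+2) := (mul_pow _ _ _).symm
      calc M (2*m+1) ≤ A ^ (2*m+1) * (M (2*m) * M 1) := h
        _ = (A ^ (2*m+1) * M 1) * M (2*m) := by ring
        _ ≤ D ^ (2*m+2) * M (2*m) := by
            exact mul_le_mul_of_nonneg_right hb (hMpos _).le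
  refine ⟨(Q * E)⁻¹, by positivity, ?_⟩
  intro k
  rw [inv_pow, inv_mul_le_iff₀ (by positivity)]
  set m := k/2 with hmdef
  have h2m : 2*m ≤ k := by omega
  have e3 : (D ^ (k+1)) ^ ((d:ℝ)/2) = Q ^ (k+1) := by
    rw [← Real.rpow_natCast D (k+1), ← Real.rpow_mul hD0.le,
      mul_comm ((k+1 : ℕ) : ℝ), Real.rpow_mul hD0.le, Real.rpow_natCast]
  calc M k ^ ((d:ℝ)/2) ≤ (D ^ (k+1) * M (2*m)) ^ ((d:ℝ)/2) :=
        Real.rpow_le_rpow (hMpos _).le (step k) hdhalf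
    _ = Q ^ (k+1) * M (2*m) ^ ((d:ℝ)/2) := by
        rw [Real.mul_rpow (by positivity) (hMpos _).le, e3]
    _ ≤ Q ^ (k+1) * (E ^ (m+1) * N (2*m)) := by
        exact mul_le_mul_of_nonneg_left (key m) (by positivity)
    _ ≤ Q ^ (k+1) * (E ^ (k+1) * N k) := by
        refine mul_le_mul_of_nonneg_left ?_ (by positivity)
        exact mul_le_mul (pow_le_pow_right₀ hE1 (by omega)) (hNmono h2m)
          (hNpos _).le (by positivity)
    _ = Q ^ (k+1) * E ^ (k+1) * N k := by ring
    _ = (Q * E) ^ (k+1) * N k := by rw [mul_pow]
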